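/- Let μ ∈ [0,1) and M_k = Σ_{j=1}^{k} μ^{k-j} G̃_j with ‖G̃_j - ∇f(W_j)‖_F ≤ ε for all j and ‖∇f(W_j) - ∇f(W_k)‖_F ≤ L·η·γ·√C_m·(k-j) for all j ≤ k (iterates move at most η·γ·√C_m per step under L-smoothness). Then ‖(1-μ)·M_k - ∇f(W_k)‖_F ≤ ε + μ^k‖∇f(W_k)‖_F + L·η·γ·√C_m·μ/(1-μ). -/

import Mathlib

private lemma reindex_sum {E : Type*} [AddCommMonoid E] (k : ℕ) (g : ℕ → E) :
    ∑ j ∈ Finset.Icc 1 k, g (k - j) = ∑ i ∈ Finset.range k, g i := by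
  refine Finset.sum_nbij' (fun j => k - j) (fun i => k - i) ?_ ?_ ?_ ?_ ?_ <;>
    intro a ha <;> simp_all [Finset.mem_Icc, Finset.mem_range] <;> omega

/-- Momentum bias bound: the normalized momentum (1-μ)M_k tracks the true gradient. -/
theorem stmt_18 (m n : ℕ) (μ ε L η γ Cm : ℝ)
    (hμ0 : 0 ≤ μ) (hμ1 : μ < 1) (hε : 0 ≤ ε)
    (hL : 0 < L) (hη : 0 < η) (hγ : 0 < γ) (hCm : 0 < Cm)
    (f : EuclideanSpace ℝ (Fin m × Fin n) → ℝ)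
    (W Gt M : ℕ → EuclideanSpace ℝ (Fin m × Fin n))
    (hM : ∀ k, M k = ∑ j ∈ Finset.Icc 1 k, μ ^ (k - j) • Gt j)
    (herr : ∀ j, ‖Gt j - gradient f (W j)‖ ≤ ε)
    (hdrift : ∀ j k : ℕ, j ≤ k →
      ‖gradient f (W j) - gradient f (W k)‖ ≤ L * η * γ * Real.sqrt Cm * ((k : ℝ) - j))
    (k : ℕ) :
    ‖(1 - μ) • M k - gradient f (W k)‖ ≤
      ε + μ ^ k * ‖gradient f (W k)‖ + L * η * γ * Real.sqrt Cm * μ / (1 - μ) := by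
  set C := L * η * γ * Real.sqrt Cm with hCdef
  have hC : 0 < C := by positivity
  have h1μ : (0:ℝ) < 1 - μ := by linarith
  set g : ℕ → EuclideanSpace ℝ (Fin m × Fin n) := fun j => gradient f (W j) with hg
  set c : ℕ → ℝ := fun j => (1 - μ) * μ ^ (k - j) with hc
  have hcnn : ∀ j, 0 ≤ c j := fun j => by positivity
  -- geometric sum fact
  have hgeom : (1 - μ) * ∑ j ∈ Finset.Icc 1 k, μ ^ (k - j) = 1 - μ ^ k := by
    rw [reindex_sum k (fun i => μ ^ i), geom_sum_eq (by linarith : μ ≠ 1)]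
    rw [mul_comm, div_mul_eq_mul_div, div_eq_iff (by intro h; apply absurd (by linarith : μ = 1) (by linarith) : μ - 1 ≠ 0)]
    ring
  -- decomposition
  have key : (1 - μ) • M k - g k =
      (∑ j ∈ Finset.Icc 1 k, c j • (Gt j - g j)) +
      (∑ j ∈ Finset.Icc 1 k, c j • (g j - g k)) +
      (((1 - μ) * ∑ j ∈ Finset.Icc 1 k, μ ^ (k - j) - 1) • g k) := by
    rw [hM k, Finset.smul_sum]
    have expand : ∀ j ∈ Finset.Icc 1 k,
        (1 - μ) • (μ ^ (k - j) • Gt j) =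
          c j • (Gt j - g j) + c j • (g j - g k) + c j • g k := by
      intro j _
      simp only [hc, smul_smul, smul_sub]
      abel
    rw [Finset.sum_congr rfl expand]
    simp only [Finset.sum_add_distrib, sub_smul, one_smul, Finset.mul_sum, ← smul_smul,
      ← Finset.smul_sum]
    rw [Finset.sum_smul]
    simp only [hc]
    abel
  rw [show (1 - μ) • M k - gradient f (W k) = (1 - μ) • M k - g k from rfl, key]
  have t1 : ‖∑ j ∈ Finset.Icc 1 k, c j • (Gt j - g j)‖ ≤ ε := by
    calc ‖∑ j ∈ Finset.Icc 1 k, c j • (Gt j - g j)‖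
        ≤ ∑ j ∈ Finset.Icc 1 k, c j * ε := by
          refine (norm_sum_le _ _).trans (Finset.sum_le_sum fun j _ => ?_)
          rw [norm_smul, Real.norm_eq_abs, abs_of_nonneg (hcnn j)]
          exact mul_le_mul_of_nonneg_left (herr j) (hcnn j)
      _ = (1 - μ ^ k) * ε := by rw [← Finset.sum_mul, ← Finset.mul_sum, hgeom]
      _ ≤ 1 * ε := by
          refine mul_le_mul_of_nonneg_right ?_ hε
          have : 0 ≤ μ ^ k := by positivity
          linarith
      _ = ε := one_mul ε
  have t2 : ‖∑ j ∈ Finset.Icc 1 k, c j • (g j - g k)‖ ≤ C * μ / (1 - μ) := by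
    have hsum : ∑ i ∈ Finset.range k, (i : ℝ) * μ ^ i ≤ μ / (1 - μ) ^ 2 := by
      refine sum_le_hasSum (L := SummationFilter.unconditional ℕ) _ (fun i _ => by positivity) ?_
      exact hasSum_coe_mul_geometric_of_norm_lt_one
        (by rwa [Real.norm_eq_abs, abs_of_nonneg hμ0])
    calc ‖∑ j ∈ Finset.Icc 1 k, c j • (g j - g k)‖
        ≤ ∑ j ∈ Finset.Icc 1 k, c j * (C * ((k : ℝ) - j)) := by
          refine (norm_sum_le _ _).trans (Finset.sum_le_sum fun j hj => ?_)
          rw [norm_smul, Real.norm_eq_abs, abs_of_nonneg (hcnn j)]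
          exact mul_le_mul_of_nonneg_left
            (hdrift j k (Finset.mem_Icc.mp hj).2) (hcnn j)
      _ = (1 - μ) * C * ∑ j ∈ Finset.Icc 1 k, ((k - j : ℕ) : ℝ) * μ ^ (k - j) := by
          rw [Finset.mul_sum]
          refine Finset.sum_congr rfl fun j hj => ?_
          have hjk := (Finset.mem_Icc.mp hj).2
          have : ((k - j : ℕ) : ℝ) = (k : ℝ) - j := by
            push_cast [hjk]; ring
          rw [this, hc]
          ring
      _ = (1 - μ) * C * ∑ i ∈ Finset.range k, (i : ℝ) * μ ^ i := by
          rw [reindex_sum k (fun i => (i : ℝ) * μ ^ i)]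
      _ ≤ (1 - μ) * C * (μ / (1 - μ) ^ 2) := by
          exact mul_le_mul_of_nonneg_left hsum (by positivity)
      _ = C * μ / (1 - μ) := by field_simp
  have t3 : ‖((1 - μ) * ∑ j ∈ Finset.Icc 1 k, μ ^ (k - j) - 1) • g k‖
      = μ ^ k * ‖g k‖ := by
    rw [norm_smul, Real.norm_eq_abs, hgeom]
    have : |1 - μ ^ k - 1| = μ ^ k := by
      rw [show (1 : ℝ) - μ ^ k - 1 = -(μ ^ k) by ring, abs_neg,
        abs_of_nonneg (by positivity)]
    rw [this]
  calc ‖(∑ j ∈ Finset.Icc 1 k, c j • (Gt j - g j)) +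
        (∑ j ∈ Finset.Icc 1 k, c j • (g j - g k)) +
        (((1 - μ) * ∑ j ∈ Finset.Icc 1 k, μ ^ (k - j) - 1) • g k)‖
      ≤ ‖∑ j ∈ Finset.Icc 1 k, c j • (Gt j - g j)‖ +
        ‖∑ j ∈ Finset.Icc 1 k, c j • (g j - g k)‖ +
        ‖((1 - μ) * ∑ j ∈ Finset.Icc 1 k, μ ^ (k - j) - 1) • g k‖ :=
      norm_add₃_le
    _ ≤ ε + C * μ / (1 - μ) + μ ^ k * ‖g k‖ := by
        rw [t3]; exact add_le_add (add_le_add t1 t2) le_rfl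
    _ = ε + μ ^ k * ‖gradient f (W k)‖ + C * μ / (1 - μ) := by rw [hg]; ring
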